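/- For continuous maps f_0,…,f_{m−1}:X→X and φ∈C(X,ℝ), the topological pressure of the free semigroup action equals sup_α { limsup_{n→∞}(1/n) log q_n(φ,α) }, where the supremum is taken over all open covers α of X. In particular, P(f_0,…,f_{m−1},φ) does not depend on the metric on X (only on the topology). -/

import Mathlib

open Filter Topology MeasureTheory Set

namespace FSA

/-- `f_w = f_{w₁} ∘ ⋯ ∘ f_{w_k}` for the word `w = [w₁,…,w_k]`; the empty word acts as
the identity. -/
def wordMap {X : Type*} {ι : Type*} (f : ι → X → X) : List ι → X → X
  | [] => id
  | a :: t => f a ∘ wordMap f t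

/-- `(S_wφ)(x) = Σ_{w'} φ(f_{w'}x)`, summing over the `|w|` words `w'` consisting of the
empty word and the proper suffixes of `w`. -/
noncomputable def birkhoff {X : Type*} {ι : Type*} (f : ι → X → X) (φ : X → ℝ)
    (w : List ι) (x : X) : ℝ :=
  (w.tails.tail.map fun w' => φ (wordMap f w' x)).sum

section Core

variable {X : Type*} {ι : Type*}

/-- Bowen metric `d_w(x,y) = max_{w'≤w} d(f_{w'}x, f_{w'}y)`, the maximum ranging over all
suffixes of `w` (including `w` itself and the empty word). -/
noncomputable def bowenDist [PseudoMetricSpace X] (f : ι → X → X) (w : List ι) (x y : X) : ℝ :=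
  (w.tails.map fun w' => dist (wordMap f w' x) (wordMap f w' y)).foldr max 0

/-- `E` is a `(w,ε)`-spanning set. -/
def IsSpanningSet [PseudoMetricSpace X] (f : ι → X → X) (w : List ι) (ε : ℝ)
    (E : Finset X) : Prop :=
  ∀ x : X, ∃ y ∈ E, bowenDist f w x y < ε

/-- `E` is a `(w,ε)`-separated set. -/
def IsSeparatedSet [PseudoMetricSpace X] (f : ι → X → X) (w : List ι) (ε : ℝ)
    (E : Finset X) : Prop :=
  ∀ x ∈ E, ∀ y ∈ E, x ≠ y → ε ≤ bowenDist f w x y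

/-- `Q_w(φ,ε) = inf { Σ_{x∈E} e^{(S_wφ)(x)} : E a (w,ε)-spanning set }`. -/
noncomputable def Qword [PseudoMetricSpace X] (f : ι → X → X) (φ : X → ℝ) (w : List ι)
    (ε : ℝ) : ℝ :=
  sInf {s : ℝ | ∃ E : Finset X, IsSpanningSet f w ε E ∧
    s = ∑ x ∈ E, Real.exp (birkhoff f φ w x)}

/-- `P_w(φ,ε) = sup { Σ_{x∈E} e^{(S_wφ)(x)} : E a (w,ε)-separated set }`. -/
noncomputable def Pword [PseudoMetricSpace X] (f : ι → X → X) (φ : X → ℝ) (w : List ι)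
    (ε : ℝ) : ℝ :=
  sSup {s : ℝ | ∃ E : Finset X, IsSeparatedSet f w ε E ∧
    s = ∑ x ∈ E, Real.exp (birkhoff f φ w x)}

/-- `Q_n(φ,ε) = m^{-n} Σ_{|w|=n} Q_w(φ,ε)`. -/
noncomputable def Qn [PseudoMetricSpace X] [Fintype ι] (f : ι → X → X) (φ : X → ℝ)
    (n : ℕ) (ε : ℝ) : ℝ :=
  (1 / (Fintype.card ι : ℝ) ^ n) * ∑ w : Fin n → ι, Qword f φ (List.ofFn w) ε

/-- `P_n(φ,ε) = m^{-n} Σ_{|w|=n} P_w(φ,ε)`. -/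
noncomputable def Pn [PseudoMetricSpace X] [Fintype ι] (f : ι → X → X) (φ : X → ℝ)
    (n : ℕ) (ε : ℝ) : ℝ :=
  (1 / (Fintype.card ι : ℝ) ^ n) * ∑ w : Fin n → ι, Pword f φ (List.ofFn w) ε

/-- Topological pressure of the free semigroup action,
`P(f₀,…,f_{m-1},φ) = lim_{ε→0} limsup_{n→∞} (1/n) log Q_n(φ,ε)`.
Since the inner quantity is nonincreasing in `ε`, the limit as `ε → 0⁺` equals the
supremum over `ε > 0`. -/
noncomputable def pressure [PseudoMetricSpace X] [Fintype ι] (f : ι → X → X) (φ : X → ℝ) :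
    EReal :=
  ⨆ (ε : ℝ) (_ : 0 < ε),
    Filter.limsup (fun n : ℕ => (↑(Real.log (Qn f φ n ε) / (n : ℝ)) : EReal)) atTop

end Core

section Cover

variable {X : Type*} {ι : Type*}

/-- `α` is an open cover of `X`. -/
def IsOpenCover [TopologicalSpace X] (α : Set (Set X)) : Prop :=
  (∀ A ∈ α, IsOpen A) ∧ ⋃₀ α = Set.univ

/-- The members of the join `⋁_{w'≤w} f_{w'}⁻¹ α`, the join taken over the `|w|` words `w'`
consisting of the empty word and the proper suffixes of `w`. -/
def coverJoin (f : ι → X → X) (α : Set (Set X)) (w : List ι) : Set (Set X) :=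
  {B | ∃ c : List ι → Set X, (∀ w' ∈ w.tails.tail, c w' ∈ α) ∧
    B = ⋂ w' ∈ w.tails.tail, wordMap f w' ⁻¹' c w'}

/-- `β` is a finite subcover of the join `⋁_{w'≤w} f_{w'}⁻¹ α`. -/
def IsFiniteSubcover (f : ι → X → X) (α : Set (Set X)) (w : List ι)
    (β : Finset (Set X)) : Prop :=
  (↑β : Set (Set X)) ⊆ coverJoin f α w ∧ ⋃₀ (↑β : Set (Set X)) = Set.univ

/-- `q_w(φ,α) = inf { Σ_{B∈β} inf_{x∈B} e^{(S_wφ)(x)} : β a finite subcover }`. -/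
noncomputable def qword (f : ι → X → X) (φ : X → ℝ) (α : Set (Set X)) (w : List ι) : ℝ :=
  sInf {s : ℝ | ∃ β : Finset (Set X), IsFiniteSubcover f α w β ∧
    s = ∑ B ∈ β, sInf ((fun x => Real.exp (birkhoff f φ w x)) '' B)}

/-- `p_w(φ,α) = inf { Σ_{B∈β} sup_{x∈B} e^{(S_wφ)(x)} : β a finite subcover }`. -/
noncomputable def pword (f : ι → X → X) (φ : X → ℝ) (α : Set (Set X)) (w : List ι) : ℝ :=
  sInf {s : ℝ | ∃ β : Finset (Set X), IsFiniteSubcover f α w β ∧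
    s = ∑ B ∈ β, sSup ((fun x => Real.exp (birkhoff f φ w x)) '' B)}

/-- `q_n(φ,α) = m^{-n} Σ_{|w|=n} q_w(φ,α)`. -/
noncomputable def qn [Fintype ι] (f : ι → X → X) (φ : X → ℝ) (α : Set (Set X)) (n : ℕ) : ℝ :=
  (1 / (Fintype.card ι : ℝ) ^ n) * ∑ w : Fin n → ι, qword f φ α (List.ofFn w)

/-- `p_n(φ,α) = m^{-n} Σ_{|w|=n} p_w(φ,α)`. -/
noncomputable def pn [Fintype ι] (f : ι → X → X) (φ : X → ℝ) (α : Set (Set X)) (n : ℕ) : ℝ :=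
  (1 / (Fintype.card ι : ℝ) ^ n) * ∑ w : Fin n → ι, pword f φ α (List.ofFn w)

end Cover

/-! ### Auxiliary lemmas -/

section AuxFold

lemma foldr_max_le_iff {l : List ℝ} {c : ℝ} :
    l.foldr max 0 ≤ c ↔ 0 ≤ c ∧ ∀ a ∈ l, a ≤ c := by
  induction l with
  | nil => simp
  | cons a t ih => simp [max_le_iff, ih]; tauto

lemma foldr_max_lt_iff {l : List ℝ} {c : ℝ} :
    l.foldr max 0 < c ↔ 0 < c ∧ ∀ a ∈ l, a < c := by
  induction l with
  | nil => simp
  | cons a t ih => simp [max_lt_iff, ih]; tauto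

lemma le_foldr_max {l : List ℝ} {a : ℝ} (ha : a ∈ l) : a ≤ l.foldr max 0 := by
  induction l with
  | nil => simp at ha
  | cons b t ih =>
    rcases List.mem_cons.1 ha with rfl | ha
    · exact le_max_left _ _
    · exact (ih ha).trans (le_max_right _ _)

lemma list_map_sum_le {α : Type*} (l : List α) (F : α → ℝ) {c : ℝ}
    (h : ∀ a ∈ l, F a ≤ c) : (l.map F).sum ≤ l.length * c := by
  induction l with
  | nil => simp
  | cons a t ih =>
    simp only [List.map_cons, List.sum_cons, List.length_cons]
    have h1 := h a List.mem_cons_self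
    have h2 := ih fun b hb => h b (List.mem_cons_of_mem _ hb)
    push_cast
    nlinarith [h1, h2]

lemma list_map_sub_sum_le {α : Type*} (l : List α) (F G : α → ℝ) {c : ℝ}
    (h : ∀ a ∈ l, F a - G a ≤ c) : (l.map F).sum - (l.map G).sum ≤ l.length * c := by
  induction l with
  | nil => simp
  | cons a t ih =>
    simp only [List.map_cons, List.sum_cons, List.length_cons]
    have h1 := h a List.mem_cons_self
    have h2 := ih fun b hb => h b (List.mem_cons_of_mem _ hb)
    push_cast
    nlinarith [h1, h2]

lemma sum_image_le' {A B : Type*} [DecidableEq B] (s : Finset A) (g : A → B) (F : B → ℝ)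
    (hF : ∀ b, 0 ≤ F b) : ∑ b ∈ s.image g, F b ≤ ∑ a ∈ s, F (g a) := by
  classical
  induction s using Finset.induction_on with
  | empty => simp
  | insert _ _ ha ih =>
    rename_i a s
    rw [Finset.image_insert, Finset.sum_insert ha]
    by_cases hg : g a ∈ s.image g
    · rw [Finset.insert_eq_self.mpr hg]
      linarith [hF (g a)]
    · rw [Finset.sum_insert hg]
      linarith

end AuxFold

section AuxBowen

variable {X : Type*} {ι : Type*} [PseudoMetricSpace X]

lemma dist_le_bowenDist (f : ι → X → X) {w w' : List ι} (h : w' ∈ w.tails) (x y : X) :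
    dist (wordMap f w' x) (wordMap f w' y) ≤ bowenDist f w x y :=
  le_foldr_max (List.mem_map_of_mem h)

lemma bowenDist_lt_iff {f : ι → X → X} {w : List ι} {x y : X} {ε : ℝ} :
    bowenDist f w x y < ε ↔
      0 < ε ∧ ∀ w' ∈ w.tails, dist (wordMap f w' x) (wordMap f w' y) < ε := by
  simp only [bowenDist, foldr_max_lt_iff, List.forall_mem_map]

lemma bowenDist_self {f : ι → X → X} {w : List ι} (x : X) : bowenDist f w x x = 0 := by
  refine le_antisymm (foldr_max_le_iff.2 ⟨le_rfl, ?_⟩) (by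
    have := foldr_max_le_iff
      (l := (w.tails.map fun w' => dist (wordMap f w' x) (wordMap f w' x)))
      (c := bowenDist f w x x)
    exact (this.1 le_rfl).1)
  simp

lemma continuous_wordMap {Y : Type*} [TopologicalSpace Y] {f : ι → Y → Y}
    (hf : ∀ i, Continuous (f i)) (w : List ι) : Continuous (wordMap f w) := by
  induction w with
  | nil => exact continuous_id
  | cons a t ih => exact (hf a).comp ih

end AuxBowen

section AuxQ

variable {X : Type*} {ι : Type*} [MetricSpace X] [CompactSpace X] [Nonempty X]
  {f : ι → X → X} {φ : X → ℝ}

/-- Existence of a finite spanning set. -/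
lemma exists_finite_spanning (hf : ∀ i, Continuous (f i)) (w : List ι) {ε : ℝ} (hε : 0 < ε) :
    ∃ E : Finset X, IsSpanningSet f w ε E := by
  have hopen : ∀ y : X, IsOpen {x | bowenDist f w x y < ε} := by
    intro y
    have heq : {x | bowenDist f w x y < ε} =
        ⋂ w' ∈ {w' : List ι | w' ∈ w.tails}, wordMap f w' ⁻¹' Metric.ball (wordMap f w' y) ε := by
      ext x
      simp [bowenDist_lt_iff, hε]
    rw [heq]
    exact Set.Finite.isOpen_biInter (List.finite_toSet _)
      fun w' _ => Metric.isOpen_ball.preimage (continuous_wordMap hf w')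
  have hcov : (univ : Set X) ⊆ ⋃ y : X, {x | bowenDist f w x y < ε} := fun x _ =>
    mem_iUnion.2 ⟨x, by simp [bowenDist_self, hε]⟩
  obtain ⟨t, ht⟩ := isCompact_univ.elim_finite_subcover _ hopen hcov
  refine ⟨t, fun x => ?_⟩
  obtain ⟨y, hy, hxy⟩ := mem_iUnion₂.1 (ht (mem_univ x))
  exact ⟨y, hy, hxy⟩

lemma Qset_bddBelow (w : List ι) (ε : ℝ) :
    BddBelow {s : ℝ | ∃ E : Finset X, IsSpanningSet f w ε E ∧
      s = ∑ x ∈ E, Real.exp (birkhoff f φ w x)} :=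
  ⟨0, by rintro s ⟨E, _, rfl⟩; exact Finset.sum_nonneg fun x _ => (Real.exp_pos _).le⟩

lemma Qword_le_sum {w : List ι} {ε : ℝ} {E : Finset X} (hE : IsSpanningSet f w ε E) :
    Qword f φ w ε ≤ ∑ x ∈ E, Real.exp (birkhoff f φ w x) :=
  csInf_le (Qset_bddBelow w ε) ⟨E, hE, rfl⟩

lemma le_Qword (hf : ∀ i, Continuous (f i)) {w : List ι} {ε : ℝ} (hε : 0 < ε) {c : ℝ}
    (h : ∀ E : Finset X, IsSpanningSet f w ε E →
      c ≤ ∑ x ∈ E, Real.exp (birkhoff f φ w x)) :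
    c ≤ Qword f φ w ε := by
  obtain ⟨E, hE⟩ := exists_finite_spanning hf w hε
  exact le_csInf ⟨_, E, hE, rfl⟩ (by rintro s ⟨E', hE', rfl⟩; exact h E' hE')

/-- Lower bound on birkhoff sums given a lower bound on `φ`. -/
lemma birkhoff_lower {C : ℝ} (hC : ∀ x, -C ≤ φ x) (w : List ι) (x : X) :
    -(w.length * C) ≤ birkhoff f φ w x := by
  have := list_map_sub_sum_le (w.tails.tail) (fun _ => (0 : ℝ))
    (fun w' => φ (wordMap f w' x)) (c := C)
    (fun a _ => by have := hC (wordMap f a x); show (0:ℝ) - φ (wordMap f a x) ≤ C; linarith)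
  have hlen : w.tails.tail.length = w.length := by
    have := List.length_tails w
    simp [List.length_tail, this]
  rw [hlen] at this
  simp only [List.map_const', List.sum_replicate, smul_zero, zero_sub] at this
  have hb : birkhoff f φ w x = ((w.tails.tail.map fun w' => φ (wordMap f w' x))).sum := rfl
  rw [hb]
  linarith

lemma exp_birkhoff_lower {C : ℝ} (hC : ∀ x, -C ≤ φ x) (w : List ι) (x : X) :
    Real.exp (-(w.length * C)) ≤ Real.exp (birkhoff f φ w x) :=
  Real.exp_le_exp.2 (birkhoff_lower hC w x)

lemma Qword_lower (hf : ∀ i, Continuous (f i)) {C : ℝ} (hC : ∀ x, -C ≤ φ x) (w : List ι)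
    {ε : ℝ} (hε : 0 < ε) : Real.exp (-(w.length * C)) ≤ Qword f φ w ε := by
  refine le_Qword hf hε fun E hE => ?_
  obtain ⟨y, hy, -⟩ := hE (Classical.arbitrary X)
  calc Real.exp (-(w.length * C)) ≤ Real.exp (birkhoff f φ w y) := exp_birkhoff_lower hC w y
    _ ≤ ∑ x ∈ E, Real.exp (birkhoff f φ w x) :=
      Finset.single_le_sum (fun x _ => (Real.exp_pos _).le) hy

end AuxQ

section Auxq

variable {X : Type*} {ι : Type*} [MetricSpace X] [CompactSpace X] [Nonempty X]
  {f : ι → X → X} {φ : X → ℝ}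

set_option linter.unusedSectionVars false

lemma isOpen_of_mem_coverJoin (hf : ∀ i, Continuous (f i)) {α : Set (Set X)}
    (hα : IsOpenCover α) {w : List ι} {B : Set X} (hB : B ∈ coverJoin f α w) : IsOpen B := by
  obtain ⟨c, hc, rfl⟩ := hB
  refine Set.Finite.isOpen_biInter ((List.finite_toSet _).subset (fun a ha => ha)) ?_
  exact fun w' hw' => (hα.1 _ (hc w' hw')).preimage (continuous_wordMap hf w')

/-- Every point lies in some member of the cover join. -/
lemma coverJoin_covers {α : Set (Set X)} (hα : IsOpenCover α) (w : List ι) (x : X) :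
    ∃ B ∈ coverJoin f α w, x ∈ B := by
  have hch : ∀ w' : List ι, ∃ A, A ∈ α ∧ wordMap f w' x ∈ A := by
    intro w'
    have := hα.2
    rw [Set.sUnion_eq_univ_iff] at this
    exact this _
  choose c hc1 hc2 using hch
  refine ⟨⋂ w' ∈ w.tails.tail, wordMap f w' ⁻¹' c w', ⟨c, fun w' _ => hc1 w', rfl⟩, ?_⟩
  exact Set.mem_biInter fun w' _ => hc2 w'

lemma exists_finite_subcover (hf : ∀ i, Continuous (f i)) {α : Set (Set X)}
    (hα : IsOpenCover α) (w : List ι) : ∃ β : Finset (Set X), IsFiniteSubcover f α w β := by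
  have hcov : (univ : Set X) ⊆ ⋃ B : coverJoin f α w, (B : Set X) := by
    intro x _
    obtain ⟨B, hB, hxB⟩ := coverJoin_covers hα w x
    exact mem_iUnion.2 ⟨⟨B, hB⟩, hxB⟩
  obtain ⟨t, ht⟩ := isCompact_univ.elim_finite_subcover _
    (fun B : coverJoin f α w => isOpen_of_mem_coverJoin hf hα B.2) hcov
  classical
  refine ⟨t.image Subtype.val, ⟨?_, ?_⟩⟩
  · intro B hB
    simp only [Finset.coe_image, Set.mem_image] at hB
    obtain ⟨⟨B', hB'⟩, -, rfl⟩ := hB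
    exact hB'
  · apply Set.eq_univ_of_univ_subset
    intro x hx
    obtain ⟨B, hB, hxB⟩ := mem_iUnion₂.1 (ht hx)
    exact ⟨B.1, Finset.mem_coe.2 (Finset.mem_image_of_mem _ hB), hxB⟩

lemma qset_bddBelow (α : Set (Set X)) (w : List ι) :
    BddBelow {s : ℝ | ∃ β : Finset (Set X), IsFiniteSubcover f α w β ∧
      s = ∑ B ∈ β, sInf ((fun x => Real.exp (birkhoff f φ w x)) '' B)} := by
  refine ⟨0, ?_⟩
  rintro s ⟨β, -, rfl⟩
  exact Finset.sum_nonneg fun B _ =>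
    Real.sInf_nonneg (by rintro y ⟨x, -, rfl⟩; exact (Real.exp_pos _).le)

lemma qword_le_sum {α : Set (Set X)} {w : List ι} {β : Finset (Set X)}
    (hβ : IsFiniteSubcover f α w β) :
    qword f φ α w ≤ ∑ B ∈ β, sInf ((fun x => Real.exp (birkhoff f φ w x)) '' B) :=
  csInf_le (qset_bddBelow α w) ⟨β, hβ, rfl⟩

lemma le_qword (hf : ∀ i, Continuous (f i)) {α : Set (Set X)} (hα : IsOpenCover α)
    {w : List ι} {c : ℝ}
    (h : ∀ β : Finset (Set X), IsFiniteSubcover f α w β →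
      c ≤ ∑ B ∈ β, sInf ((fun x => Real.exp (birkhoff f φ w x)) '' B)) :
    c ≤ qword f φ α w := by
  obtain ⟨β, hβ⟩ := exists_finite_subcover hf hα w
  exact le_csInf ⟨_, β, hβ, rfl⟩ (by rintro s ⟨β', hβ', rfl⟩; exact h β' hβ')

lemma qword_lower (hf : ∀ i, Continuous (f i)) {C : ℝ} (hC : ∀ x, -C ≤ φ x)
    {α : Set (Set X)} (hα : IsOpenCover α) (w : List ι) :
    Real.exp (-(w.length * C)) ≤ qword f φ α w := by
  refine le_qword hf hα fun β hβ => ?_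
  obtain ⟨x⟩ := ‹Nonempty X›
  have hx : x ∈ ⋃₀ (↑β : Set (Set X)) := hβ.2.symm ▸ mem_univ x
  obtain ⟨B, hB, hxB⟩ := hx
  have hBβ : B ∈ β := hB
  have hterm : Real.exp (-(w.length * C)) ≤
      sInf ((fun x => Real.exp (birkhoff f φ w x)) '' B) := by
    refine le_csInf ⟨_, Set.mem_image_of_mem _ hxB⟩ ?_
    rintro y ⟨u, -, rfl⟩
    exact exp_birkhoff_lower hC w u
  calc Real.exp (-(w.length * C)) ≤ sInf ((fun x => Real.exp (birkhoff f φ w x)) '' B) := hterm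
    _ ≤ ∑ B ∈ β, sInf ((fun x => Real.exp (birkhoff f φ w x)) '' B) :=
      Finset.single_le_sum (fun B _ => Real.sInf_nonneg
        (by rintro y ⟨u, -, rfl⟩; exact (Real.exp_pos _).le)) hBβ

end Auxq

section KeyIneq

variable {X : Type*} {ι : Type*} [MetricSpace X] [CompactSpace X] [Nonempty X]
  {f : ι → X → X} {φ : X → ℝ}

set_option linter.unusedSectionVars false

/-- Direction A at word level: every open cover admits a Lebesgue radius `δ` with
`q_w(φ,α) ≤ Q_w(φ,δ)` for all words `w`. -/
lemma exists_qword_le_Qword (hf : ∀ i, Continuous (f i)) {α : Set (Set X)}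
    (hα : IsOpenCover α) :
    ∃ δ > 0, ∀ w : List ι, qword f φ α w ≤ Qword f φ w δ := by
  obtain ⟨δ, hδ, hLeb⟩ := lebesgue_number_lemma_of_metric_sUnion isCompact_univ
    (fun A hA => hα.1 A hA) (by rw [hα.2])
  refine ⟨δ, hδ, fun w => ?_⟩
  refine le_Qword hf hδ fun E hE => ?_
  classical
  choose A hA1 hA2 using fun z : X => hLeb z (mem_univ z)
  set Bof : X → Set X := fun y =>
    ⋂ w' ∈ w.tails.tail, wordMap f w' ⁻¹' A (wordMap f w' y) with hBof
  have hBmem : ∀ y, Bof y ∈ coverJoin f α w := fun y =>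
    ⟨fun w' => A (wordMap f w' y), fun w' _ => hA1 _, rfl⟩
  have hball : ∀ y x, bowenDist f w x y < δ → x ∈ Bof y := by
    intro y x hxy
    refine Set.mem_biInter fun w' hw' => ?_
    have hle := dist_le_bowenDist f (List.mem_of_mem_tail hw') x y
    exact hA2 (wordMap f w' y) (Metric.mem_ball.2 (lt_of_le_of_lt hle hxy))
  set β : Finset (Set X) := E.image Bof with hβdef
  have hsub : IsFiniteSubcover f α w β := by
    constructor
    · intro B hB
      simp only [hβdef, Finset.coe_image, Set.mem_image] at hB
      obtain ⟨y, -, rfl⟩ := hB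
      exact hBmem y
    · apply Set.eq_univ_of_univ_subset
      intro x _
      obtain ⟨y, hy, hxy⟩ := hE x
      exact ⟨Bof y, Finset.mem_coe.2 (Finset.mem_image_of_mem _ hy), hball y x hxy⟩
  refine (qword_le_sum hsub).trans ?_
  calc ∑ B ∈ β, sInf ((fun x => Real.exp (birkhoff f φ w x)) '' B)
      ≤ ∑ y ∈ E, sInf ((fun x => Real.exp (birkhoff f φ w x)) '' Bof y) :=
        sum_image_le' _ _ _ fun B => Real.sInf_nonneg
          (by rintro s ⟨u, -, rfl⟩; exact (Real.exp_pos _).le)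
    _ ≤ ∑ y ∈ E, Real.exp (birkhoff f φ w y) := by
        refine Finset.sum_le_sum fun y _ => ?_
        refine csInf_le ⟨0, by rintro s ⟨u, -, rfl⟩; exact (Real.exp_pos _).le⟩ ?_
        exact Set.mem_image_of_mem _ (hball y y (by rw [bowenDist_self]; exact hδ))

end KeyIneq

section KeyIneqB

variable {X : Type*} {ι : Type*} [MetricSpace X] [CompactSpace X] [Nonempty X]
  [Fintype ι] [Nonempty ι] {f : ι → X → X} {φ : X → ℝ}

set_option linter.unusedSectionVars false

/-- Direction B at word level: for `ε, δ > 0` there is an open cover `α` with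
`Q_w(φ,ε) ≤ e^{|w|δ} q_w(φ,α)` for all nonempty words `w`. -/
lemma exists_Qword_le_qword (hf : ∀ i, Continuous (f i)) (hφ : Continuous φ)
    {ε δ : ℝ} (hε : 0 < ε) (hδ : 0 < δ) :
    ∃ α : Set (Set X), IsOpenCover α ∧ ∀ w : List ι, w ≠ [] →
      Qword f φ w ε ≤ Real.exp (w.length * δ) * qword f φ α w := by
  classical
  -- uniform continuity of φ
  obtain ⟨η₁, hη₁, hφη⟩ := Metric.uniformContinuous_iff.mp
    (CompactSpace.uniformContinuous_of_continuous hφ) δ hδ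
  -- uniform continuity of the maps f i
  choose ηf hηf hfη using fun i : ι => Metric.uniformContinuous_iff.mp
    (CompactSpace.uniformContinuous_of_continuous (hf i)) ε hε
  set η : ℝ := min ε (min η₁ (Finset.univ.inf' Finset.univ_nonempty ηf)) with hηdef
  have hη : 0 < η := by
    refine lt_min hε (lt_min hη₁ ?_)
    exact (Finset.lt_inf'_iff _).2 fun i _ => hηf i
  have hηε : η ≤ ε := min_le_left _ _
  have hηφ : η ≤ η₁ := (min_le_right _ _).trans (min_le_left _ _)
  have hηfi : ∀ i, η ≤ ηf i := fun i =>
    ((min_le_right _ _).trans (min_le_right _ _)).trans (Finset.inf'_le _ (Finset.mem_univ i))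
  set α : Set (Set X) := Set.range (fun z : X => Metric.ball z (η / 2)) with hαdef
  have hαcover : IsOpenCover α := by
    constructor
    · rintro A ⟨z, rfl⟩; exact Metric.isOpen_ball
    · rw [Set.sUnion_eq_univ_iff]
      exact fun x => ⟨Metric.ball x (η / 2), ⟨x, rfl⟩, Metric.mem_ball_self (by positivity)⟩
  -- key geometric fact
  have keyclaim : ∀ (w : List ι), ∀ B ∈ coverJoin f α w, ∀ u ∈ B, ∀ v ∈ B,
      ∀ w' ∈ w.tails.tail, dist (wordMap f w' u) (wordMap f w' v) < η := by
    rintro w B ⟨c, hc, rfl⟩ u hu v hv w' hw'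
    obtain ⟨z, hz⟩ := hc w' hw'
    have hu' : wordMap f w' u ∈ Metric.ball z (η / 2) := by
      have := Set.mem_iInter₂.1 hu w' hw'
      simp only [← hz] at this
      exact this
    have hv' : wordMap f w' v ∈ Metric.ball z (η / 2) := by
      have := Set.mem_iInter₂.1 hv w' hw'
      simp only [← hz] at this
      exact this
    rw [Metric.mem_ball] at hu' hv'
    calc dist (wordMap f w' u) (wordMap f w' v)
        ≤ dist (wordMap f w' u) z + dist (wordMap f w' v) z := dist_triangle_right _ _ _
      _ < η := by linarith
  refine ⟨α, hαcover, fun w hw => ?_⟩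
  obtain ⟨a, t, rfl⟩ := List.exists_cons_of_ne_nil hw
  set w : List ι := a :: t with hwdef
  set n : ℕ := w.length with hndef
  have htt : w.tails.tail = t.tails := by rw [hwdef, List.tails_cons]; rfl
  -- the per-subcover estimate
  have key : ∀ β : Finset (Set X), IsFiniteSubcover f α w β →
      Qword f φ w ε ≤ Real.exp (n * δ) *
        ∑ B ∈ β, sInf ((fun x => Real.exp (birkhoff f φ w x)) '' B) := by
    intro β hβ
    set g : Set X → X := fun B => if hB : B.Nonempty then hB.some else Classical.arbitrary X
      with hgdef
    have hgmem : ∀ B : Set X, B.Nonempty → g B ∈ B := fun B hB => by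
      simp only [hgdef, dif_pos hB]; exact hB.some_mem
    set β' : Finset (Set X) := β.filter (fun B => B.Nonempty) with hβ'def
    set E : Finset X := β'.image g with hEdef
    have hspan : IsSpanningSet f w ε E := by
      intro x
      have hx : x ∈ ⋃₀ (↑β : Set (Set X)) := hβ.2.symm ▸ mem_univ x
      obtain ⟨B, hBβ, hxB⟩ := hx
      have hBne : B.Nonempty := ⟨x, hxB⟩
      refine ⟨g B, Finset.mem_image_of_mem g (Finset.mem_filter.2 ⟨hBβ, hBne⟩), ?_⟩
      have hBJ : B ∈ coverJoin f α w := hβ.1 hBβ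
      have hgB : g B ∈ B := hgmem B hBne
      have hkey := keyclaim w B hBJ x hxB (g B) hgB
      rw [bowenDist_lt_iff]
      refine ⟨hε, fun w'' hw'' => ?_⟩
      rw [hwdef, List.tails_cons] at hw''
      rcases List.mem_cons.1 hw'' with hw'' | hw''
      · -- w'' = w itself
        have htmem : t ∈ w.tails.tail := by
          rw [htt]; exact (List.mem_tails _ _).2 (List.suffix_refl t)
        have hd := hkey t htmem
        have hd' : dist (wordMap f t x) (wordMap f t (g B)) < ηf a :=
          lt_of_lt_of_le hd (hηfi a)
        have := hfη a hd'
        rw [hw'']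
        simpa [wordMap] using this
      · have hmem : w'' ∈ w.tails.tail := by rw [htt]; exact hw''
        exact lt_of_lt_of_le (hkey w'' hmem) hηε
    -- sum estimate
    have perB : ∀ B ∈ β', Real.exp (birkhoff f φ w (g B)) ≤
        Real.exp (n * δ) * sInf ((fun x => Real.exp (birkhoff f φ w x)) '' B) := by
      intro B hB
      obtain ⟨hBβ, hBne⟩ := Finset.mem_filter.1 hB
      have hBJ : B ∈ coverJoin f α w := hβ.1 hBβ
      have hgB : g B ∈ B := hgmem B hBne
      have hbound : ∀ u ∈ B, birkhoff f φ w (g B) ≤ birkhoff f φ w u + n * δ := by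
        intro u hu
        have hsub := list_map_sub_sum_le w.tails.tail
          (fun w' => φ (wordMap f w' (g B))) (fun w' => φ (wordMap f w' u)) (c := δ)
          (fun w' hw' => by
            have hd := keyclaim w B hBJ (g B) hgB u hu w' hw'
            have := hφη (lt_of_lt_of_le hd hηφ)
            rw [Real.dist_eq] at this
            have := abs_lt.1 this
            linarith [this.1, this.2])
        have hlen : w.tails.tail.length = n := by
          rw [List.length_tail, List.length_tails, hndef]
          simp
        rw [hlen] at hsub
        have h1 : birkhoff f φ w (g B) =
            ((w.tails.tail.map fun w' => φ (wordMap f w' (g B)))).sum := rfl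
        have h2 : birkhoff f φ w u =
            ((w.tails.tail.map fun w' => φ (wordMap f w' u))).sum := rfl
        rw [h1, h2]
        linarith
      have himg : ((fun x => Real.exp (birkhoff f φ w x)) '' B).Nonempty :=
        ⟨_, Set.mem_image_of_mem _ hgB⟩
      have hle : Real.exp (birkhoff f φ w (g B)) * (Real.exp (n * δ))⁻¹ ≤
          sInf ((fun x => Real.exp (birkhoff f φ w x)) '' B) := by
        refine le_csInf himg ?_
        rintro s ⟨u, hu, rfl⟩
        rw [mul_inv_le_iff₀ (Real.exp_pos _)]
        calc Real.exp (birkhoff f φ w (g B)) ≤ Real.exp (birkhoff f φ w u + n * δ) :=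
              Real.exp_le_exp.2 (hbound u hu)
          _ = Real.exp (birkhoff f φ w u) * Real.exp (n * δ) := Real.exp_add _ _
      rw [mul_inv_le_iff₀ (Real.exp_pos _)] at hle
      calc Real.exp (birkhoff f φ w (g B))
          ≤ sInf ((fun x => Real.exp (birkhoff f φ w x)) '' B) * Real.exp (n * δ) := hle
        _ = Real.exp (n * δ) * sInf ((fun x => Real.exp (birkhoff f φ w x)) '' B) :=
            mul_comm _ _
    calc Qword f φ w ε ≤ ∑ y ∈ E, Real.exp (birkhoff f φ w y) := Qword_le_sum hspan
      _ ≤ ∑ B ∈ β', Real.exp (birkhoff f φ w (g B)) :=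
          sum_image_le' _ _ _ fun y => (Real.exp_pos _).le
      _ ≤ ∑ B ∈ β', Real.exp (n * δ) *
            sInf ((fun x => Real.exp (birkhoff f φ w x)) '' B) :=
          Finset.sum_le_sum perB
      _ = Real.exp (n * δ) * ∑ B ∈ β',
            sInf ((fun x => Real.exp (birkhoff f φ w x)) '' B) := by
          rw [Finset.mul_sum]
      _ ≤ Real.exp (n * δ) * ∑ B ∈ β,
            sInf ((fun x => Real.exp (birkhoff f φ w x)) '' B) := by
          refine mul_le_mul_of_nonneg_left ?_ (Real.exp_pos _).le
          refine Finset.sum_le_sum_of_subset_of_nonneg (Finset.filter_subset _ _) ?_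
          intro B _ _
          exact Real.sInf_nonneg (by rintro s ⟨u, -, rfl⟩; exact (Real.exp_pos _).le)
  -- conclude via the infimum
  have h2 : Qword f φ w ε * (Real.exp (n * δ))⁻¹ ≤ qword f φ α w := by
    refine le_qword hf hαcover fun β hβ => ?_
    rw [mul_inv_le_iff₀ (Real.exp_pos _)]
    exact (key β hβ).trans_eq (mul_comm _ _)
  rw [mul_inv_le_iff₀ (Real.exp_pos _)] at h2
  calc Qword f φ w ε ≤ qword f φ α w * Real.exp (n * δ) := h2
    _ = Real.exp (w.length * δ) * qword f φ α w := by rw [mul_comm, hndef]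

end KeyIneqB

section Assemble

variable {X : Type*} {ι : Type*} [MetricSpace X] [CompactSpace X] [Nonempty X]
  [Fintype ι] [Nonempty ι] {f : ι → X → X} {φ : X → ℝ}

set_option linter.unusedSectionVars false

lemma avg_lower {n : ℕ} {e : ℝ} (F : (Fin n → ι) → ℝ) (h : ∀ w, e ≤ F w) :
    e ≤ (1 / (Fintype.card ι : ℝ) ^ n) * ∑ w : Fin n → ι, F w := by
  have hM : (0:ℝ) < (Fintype.card ι : ℝ) ^ n := by
    have h0 : (0:ℝ) < (Fintype.card ι : ℝ) := by exact_mod_cast Fintype.card_pos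
    positivity
  have hsum : (Fintype.card (Fin n → ι) : ℝ) * e ≤ ∑ w : Fin n → ι, F w := by
    have := Finset.card_nsmul_le_sum Finset.univ F e (fun w _ => h w)
    simpa [nsmul_eq_mul, Finset.card_univ] using this
  have hcard : (Fintype.card (Fin n → ι) : ℝ) = (Fintype.card ι : ℝ) ^ n := by
    rw [Fintype.card_fun, Fintype.card_fin]; push_cast; ring
  rw [hcard] at hsum
  rw [one_div, ← div_eq_inv_mul, le_div_iff₀ hM]
  nlinarith

lemma avg_le_avg {n : ℕ} {c : ℝ} (hc : 0 ≤ c) (F G : (Fin n → ι) → ℝ)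
    (h : ∀ w, F w ≤ c * G w) :
    (1 / (Fintype.card ι : ℝ) ^ n) * ∑ w : Fin n → ι, F w ≤
      c * ((1 / (Fintype.card ι : ℝ) ^ n) * ∑ w : Fin n → ι, G w) := by
  have h0 : (0:ℝ) < (Fintype.card ι : ℝ) := by exact_mod_cast Fintype.card_pos
  have hM : (0:ℝ) ≤ 1 / (Fintype.card ι : ℝ) ^ n := by positivity
  calc (1 / (Fintype.card ι : ℝ) ^ n) * ∑ w : Fin n → ι, F w
      ≤ (1 / (Fintype.card ι : ℝ) ^ n) * ∑ w : Fin n → ι, c * G w :=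
        mul_le_mul_of_nonneg_left (Finset.sum_le_sum fun w _ => h w) hM
    _ = c * ((1 / (Fintype.card ι : ℝ) ^ n) * ∑ w : Fin n → ι, G w) := by
        rw [← Finset.mul_sum]; ring

lemma Qn_lower (hf : ∀ i, Continuous (f i)) {C : ℝ} (hC : ∀ x, -C ≤ φ x)
    (n : ℕ) {ε : ℝ} (hε : 0 < ε) : Real.exp (-(n * C)) ≤ Qn f φ n ε := by
  refine avg_lower _ fun w => ?_
  have := Qword_lower hf hC (List.ofFn w) hε
  rwa [List.length_ofFn] at this

lemma qn_lower (hf : ∀ i, Continuous (f i)) {C : ℝ} (hC : ∀ x, -C ≤ φ x)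
    {α : Set (Set X)} (hα : IsOpenCover α) (n : ℕ) :
    Real.exp (-(n * C)) ≤ qn f φ α n := by
  refine avg_lower _ fun w => ?_
  have := qword_lower hf hC hα (List.ofFn w)
  rwa [List.length_ofFn] at this

lemma limsup_log_div_le {u v : ℕ → ℝ} (h : ∀ n : ℕ, 1 ≤ n → 0 < u n ∧ u n ≤ v n) :
    Filter.limsup (fun n : ℕ => ((Real.log (u n) / (n : ℝ) : ℝ) : EReal)) atTop ≤
      Filter.limsup (fun n : ℕ => ((Real.log (v n) / (n : ℝ) : ℝ) : EReal)) atTop := by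
  refine Filter.limsup_le_limsup ?_
  filter_upwards [eventually_ge_atTop 1] with n hn
  obtain ⟨h1, h2⟩ := h n hn
  have hlog := Real.log_le_log h1 h2
  have hn' : (0:ℝ) < (n : ℝ) := by exact_mod_cast hn
  exact EReal.coe_le_coe_iff.2 ((div_le_div_iff_of_pos_right hn').2 hlog)

/-- Direction A assembled. -/
lemma cover_limsup_le_pressure (hf : ∀ i, Continuous (f i)) (hφ : Continuous φ)
    {α : Set (Set X)} (hα : IsOpenCover α) :
    Filter.limsup (fun n : ℕ => ((Real.log (qn f φ α n) / (n : ℝ) : ℝ) : EReal)) atTop ≤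
      pressure f φ := by
  obtain ⟨C, hC0⟩ := isCompact_univ.exists_bound_of_continuousOn hφ.continuousOn
  have hC : ∀ x : X, -C ≤ φ x := fun x => neg_le_of_abs_le (by simpa using hC0 x (mem_univ x))
  obtain ⟨δ, hδ, hqQ⟩ := exists_qword_le_Qword hf hα
  have hmain : ∀ n : ℕ, 1 ≤ n → 0 < qn f φ α n ∧ qn f φ α n ≤ Qn f φ n δ := by
    intro n _
    refine ⟨lt_of_lt_of_le (Real.exp_pos _) (qn_lower hf hC hα n), ?_⟩
    have h0 : (0:ℝ) < (Fintype.card ι : ℝ) := by exact_mod_cast Fintype.card_pos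
    have hM : (0:ℝ) ≤ 1 / (Fintype.card ι : ℝ) ^ n := by positivity
    exact mul_le_mul_of_nonneg_left
      (Finset.sum_le_sum fun w _ => hqQ (List.ofFn w)) hM
  exact (limsup_log_div_le hmain).trans
    (le_iSup₂ (f := fun (ε : ℝ) (_ : 0 < ε) =>
      Filter.limsup (fun n : ℕ => ((Real.log (Qn f φ n ε) / (n : ℝ) : ℝ) : EReal)) atTop) δ hδ)

end Assemble

section AssembleB

variable {X : Type*} {ι : Type*} [MetricSpace X] [CompactSpace X] [Nonempty X]
  [Fintype ι] [Nonempty ι] {f : ι → X → X} {φ : X → ℝ}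

set_option linter.unusedSectionVars false

lemma ereal_le_of_forall_add {L S : EReal} (hS : S ≠ ⊥)
    (h : ∀ δ : ℝ, 0 < δ → L ≤ (δ : EReal) + S) : L ≤ S := by
  induction S with
  | bot => simp at hS
  | coe s =>
    by_contra hc
    push_neg at hc
    obtain ⟨r, hr1, hr2⟩ := EReal.exists_between_coe_real hc
    have hsr : s < r := by exact_mod_cast hr1
    have := h (r - s) (by linarith)
    rw [← EReal.coe_add] at this
    have : L ≤ (r : EReal) := by simpa using this
    exact absurd (lt_of_lt_of_le hr2 this) (lt_irrefl _)
  | top => exact le_top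

/-- Direction B assembled. -/
lemma pressure_le_cover_sup (hf : ∀ i, Continuous (f i)) (hφ : Continuous φ) :
    pressure f φ ≤ ⨆ (α : Set (Set X)) (_ : IsOpenCover α),
      Filter.limsup (fun n : ℕ => ((Real.log (qn f φ α n) / (n : ℝ) : ℝ) : EReal)) atTop := by
  set S := ⨆ (α : Set (Set X)) (_ : IsOpenCover α),
      Filter.limsup (fun n : ℕ => ((Real.log (qn f φ α n) / (n : ℝ) : ℝ) : EReal)) atTop with hSdef
  obtain ⟨C, hC0⟩ := isCompact_univ.exists_bound_of_continuousOn hφ.continuousOn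
  have hC : ∀ x : X, -C ≤ φ x := fun x => neg_le_of_abs_le (by simpa using hC0 x (mem_univ x))
  -- S is not ⊥
  have hScoverlb : ∀ (α : Set (Set X)), IsOpenCover α → ((-C : ℝ) : EReal) ≤
      Filter.limsup (fun n : ℕ => ((Real.log (qn f φ α n) / (n : ℝ) : ℝ) : EReal)) atTop := by
    intro α hα
    have hev : ∀ᶠ n : ℕ in atTop, ((-C : ℝ) : EReal) ≤
        ((Real.log (qn f φ α n) / (n : ℝ) : ℝ) : EReal) := by
      filter_upwards [eventually_ge_atTop 1] with n hn
      have hn' : (0:ℝ) < (n : ℝ) := by exact_mod_cast hn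
      have h1 := qn_lower hf hC hα n
      have h2 : -((n:ℝ) * C) ≤ Real.log (qn f φ α n) := by
        have := Real.log_le_log (Real.exp_pos _) h1
        rwa [Real.log_exp] at this
      refine EReal.coe_le_coe_iff.2 ?_
      rw [le_div_iff₀ hn']
      nlinarith
    calc ((-C : ℝ) : EReal) =
        Filter.limsup (fun _ : ℕ => ((-C : ℝ) : EReal)) atTop := (limsup_const _).symm
      _ ≤ _ := Filter.limsup_le_limsup hev
  have hSne : S ≠ ⊥ := by
    have hα0 : IsOpenCover ({univ} : Set (Set X)) := by
      constructor
      · rintro A hA; rw [Set.mem_singleton_iff] at hA; subst hA; exact isOpen_univ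
      · simp
    have : ((-C : ℝ) : EReal) ≤ S :=
      (hScoverlb _ hα0).trans (le_iSup₂ (f := fun (α : Set (Set X)) (_ : IsOpenCover α) =>
        Filter.limsup (fun n : ℕ => ((Real.log (qn f φ α n) / (n : ℝ) : ℝ) : EReal)) atTop)
        _ hα0)
    exact fun hbot => by simp [hbot] at this
  refine iSup₂_le fun ε hε => ?_
  refine ereal_le_of_forall_add hSne fun δ hδ => ?_
  obtain ⟨α, hα, hQq⟩ := exists_Qword_le_qword hf hφ hε hδ
  have hQle : ∀ n : ℕ, 1 ≤ n → Qn f φ n ε ≤ Real.exp (n * δ) * qn f φ α n := by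
    intro n hn
    refine avg_le_avg (Real.exp_pos _).le _ _ fun w => ?_
    have hne : List.ofFn w ≠ [] := by
      have : (List.ofFn w).length = n := List.length_ofFn
      intro hnil
      rw [hnil] at this
      simp at this
      omega
    have := hQq (List.ofFn w) hne
    rwa [List.length_ofFn] at this
  have hstep : ∀ n : ℕ, 1 ≤ n →
      ((Real.log (Qn f φ n ε) / (n : ℝ) : ℝ) : EReal) ≤
        (δ : EReal) + ((Real.log (qn f φ α n) / (n : ℝ) : ℝ) : EReal) := by
    intro n hn
    have hn' : (0:ℝ) < (n : ℝ) := by exact_mod_cast hn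
    have hQpos : 0 < Qn f φ n ε := lt_of_lt_of_le (Real.exp_pos _) (Qn_lower hf hC n hε)
    have hqpos : 0 < qn f φ α n := lt_of_lt_of_le (Real.exp_pos _) (qn_lower hf hC hα n)
    have hlog : Real.log (Qn f φ n ε) ≤ (n : ℝ) * δ + Real.log (qn f φ α n) := by
      have := Real.log_le_log hQpos (hQle n hn)
      rwa [Real.log_mul (Real.exp_ne_zero _) (ne_of_gt hqpos), Real.log_exp] at this
    have hdiv : Real.log (Qn f φ n ε) / (n : ℝ) ≤ δ + Real.log (qn f φ α n) / (n : ℝ) := by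
      rw [div_le_iff₀ hn']
      have : (δ + Real.log (qn f φ α n) / (n : ℝ)) * (n : ℝ) =
          (n : ℝ) * δ + Real.log (qn f φ α n) := by
        field_simp
      rw [this]
      exact hlog
    calc ((Real.log (Qn f φ n ε) / (n : ℝ) : ℝ) : EReal) ≤
        ((δ + Real.log (qn f φ α n) / (n : ℝ) : ℝ) : EReal) := EReal.coe_le_coe_iff.2 hdiv
      _ = (δ : EReal) + ((Real.log (qn f φ α n) / (n : ℝ) : ℝ) : EReal) := EReal.coe_add _ _
  have hlim1 : Filter.limsup (fun n : ℕ => ((Real.log (Qn f φ n ε) / (n : ℝ) : ℝ) : EReal)) atTop ≤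
      Filter.limsup (fun n : ℕ => (δ : EReal) +
        ((Real.log (qn f φ α n) / (n : ℝ) : ℝ) : EReal)) atTop := by
    refine Filter.limsup_le_limsup ?_
    filter_upwards [eventually_ge_atTop 1] with n hn
    exact hstep n hn
  have hlim2 : Filter.limsup (fun n : ℕ => (δ : EReal) +
        ((Real.log (qn f φ α n) / (n : ℝ) : ℝ) : EReal)) atTop ≤
      (δ : EReal) + Filter.limsup
        (fun n : ℕ => ((Real.log (qn f φ α n) / (n : ℝ) : ℝ) : EReal)) atTop := by
    have h1 : Filter.limsup (fun _ : ℕ => (δ : EReal)) atTop = (δ : EReal) := limsup_const _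
    have := EReal.limsup_add_le (f := atTop)
      (u := fun _ : ℕ => (δ : EReal))
      (v := fun n : ℕ => ((Real.log (qn f φ α n) / (n : ℝ) : ℝ) : EReal))
      (by rw [h1]; exact Or.inl (EReal.coe_ne_bot δ))
      (by rw [h1]; exact Or.inl (EReal.coe_ne_top δ))
    rw [h1] at this
    exact this
  have hlim3 : Filter.limsup
      (fun n : ℕ => ((Real.log (qn f φ α n) / (n : ℝ) : ℝ) : EReal)) atTop ≤ S :=
    le_iSup₂ (f := fun (α : Set (Set X)) (_ : IsOpenCover α) =>
      Filter.limsup (fun n : ℕ => ((Real.log (qn f φ α n) / (n : ℝ) : ℝ) : EReal)) atTop) α hα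
  calc Filter.limsup (fun n : ℕ => ((Real.log (Qn f φ n ε) / (n : ℝ) : ℝ) : EReal)) atTop
      ≤ _ := hlim1
    _ ≤ _ := hlim2
    _ ≤ (δ : EReal) + S := add_le_add_right hlim3 _

end AssembleB

section Conj

variable {X Y : Type*} {ι : Type*} [MetricSpace X] [CompactSpace X] [Nonempty X]
  [MetricSpace Y] [CompactSpace Y] [Nonempty Y] [Fintype ι] [Nonempty ι]

set_option linter.unusedSectionVars false

lemma wordMap_conj (h : X ≃ₜ Y) (f : ι → X → X) (w : List ι) (x : X) :
    wordMap (fun i => (h : X → Y) ∘ f i ∘ (h.symm : Y → X)) w (h x) = h (wordMap f w x) := by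
  induction w with
  | nil => rfl
  | cons a t ih =>
    simp only [wordMap, Function.comp_apply, ih, Homeomorph.symm_apply_apply]

lemma birkhoff_conj (h : X ≃ₜ Y) (f : ι → X → X) (φ : X → ℝ) (w : List ι) (x : X) :
    birkhoff (fun i => (h : X → Y) ∘ f i ∘ (h.symm : Y → X)) (φ ∘ (h.symm : Y → X)) w (h x) =
      birkhoff f φ w x := by
  unfold birkhoff
  congr 1
  refine List.map_congr_left fun w' _ => ?_
  simp [wordMap_conj h f w' x]

lemma pressure_conj_le (f : ι → X → X) (hf : ∀ i, Continuous (f i))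
    (φ : X → ℝ) (hφ : Continuous φ) (h : X ≃ₜ Y) :
    pressure (fun i => (h : X → Y) ∘ f i ∘ (h.symm : Y → X)) (φ ∘ (h.symm : Y → X)) ≤
      pressure f φ := by
  set g : ι → Y → Y := fun i => (h : X → Y) ∘ f i ∘ (h.symm : Y → X) with hgdef
  set ψ : Y → ℝ := φ ∘ (h.symm : Y → X) with hψdef
  refine iSup₂_le fun ε hε => ?_
  -- uniform continuity of h
  obtain ⟨η₀, hη₀, hhu⟩ := Metric.uniformContinuous_iff.mp
    (CompactSpace.uniformContinuous_of_continuous h.continuous) ε hε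
  set η : ℝ := min ε η₀ with hηdef
  have hη : 0 < η := lt_min hε hη₀
  -- word level comparison
  have hword : ∀ w : List ι, Qword g ψ w ε ≤ Qword f φ w η := by
    intro w
    refine le_Qword hf hη fun E hE => ?_
    classical
    have hspan : IsSpanningSet g w ε (E.image (h : X → Y)) := by
      intro u
      obtain ⟨y, hy, hxy⟩ := hE (h.symm u)
      refine ⟨h y, Finset.mem_image_of_mem _ hy, ?_⟩
      rw [bowenDist_lt_iff]
      refine ⟨hε, fun w' hw' => ?_⟩
      have hd : dist (wordMap f w' (h.symm u)) (wordMap f w' y) < η :=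
        lt_of_le_of_lt (dist_le_bowenDist f hw' _ _) hxy
      have hd' : dist (wordMap f w' (h.symm u)) (wordMap f w' y) < η₀ :=
        lt_of_lt_of_le hd (min_le_right _ _)
      have := hhu hd'
      have heq1 : wordMap g w' u = h (wordMap f w' (h.symm u)) := by
        have := wordMap_conj h f w' (h.symm u)
        rwa [h.apply_symm_apply] at this
      have heq2 : wordMap g w' (h y) = h (wordMap f w' y) := wordMap_conj h f w' y
      rw [heq1, heq2]
      exact this
    have hsum : ∑ v ∈ E.image (h : X → Y), Real.exp (birkhoff g ψ w v) =
        ∑ y ∈ E, Real.exp (birkhoff f φ w y) := by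
      rw [Finset.sum_image (fun a _ b _ hab => h.injective hab)]
      exact Finset.sum_congr rfl fun y _ => by rw [birkhoff_conj h f φ w y]
    exact (Qword_le_sum hspan).trans_eq hsum
  -- n level
  obtain ⟨C, hC0⟩ := isCompact_univ.exists_bound_of_continuousOn hφ.continuousOn
  have hC : ∀ x : X, -C ≤ φ x := fun x => neg_le_of_abs_le (by simpa using hC0 x (mem_univ x))
  have hCψ : ∀ u : Y, -C ≤ ψ u := fun u => hC (h.symm u)
  have hg : ∀ i, Continuous (g i) :=
    fun i => h.continuous.comp ((hf i).comp h.symm.continuous)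
  have hmain : ∀ n : ℕ, 1 ≤ n → 0 < Qn g ψ n ε ∧ Qn g ψ n ε ≤ Qn f φ n η := by
    intro n _
    refine ⟨lt_of_lt_of_le (Real.exp_pos _) (Qn_lower hg hCψ n hε), ?_⟩
    have h0 : (0:ℝ) < (Fintype.card ι : ℝ) := by exact_mod_cast Fintype.card_pos
    have hM : (0:ℝ) ≤ 1 / (Fintype.card ι : ℝ) ^ n := by positivity
    exact mul_le_mul_of_nonneg_left
      (Finset.sum_le_sum fun w _ => hword (List.ofFn w)) hM
  exact (limsup_log_div_le hmain).trans
    (le_iSup₂ (f := fun (ε : ℝ) (_ : 0 < ε) =>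
      Filter.limsup (fun n : ℕ => ((Real.log (Qn f φ n ε) / (n : ℝ) : ℝ) : EReal)) atTop) η hη)

end Conj


/-- The topological pressure equals
`sup_α limsup_{n→∞} (1/n) log q_n(φ,α)` over all open covers `α` of `X`; in particular it
does not depend on the metric (it is invariant under topological conjugacy). -/
theorem stmt_6 {X : Type*} [MetricSpace X] [CompactSpace X] [Nonempty X]
    {ι : Type*} [Fintype ι] [Nonempty ι]
    (f : ι → X → X) (hf : ∀ i, Continuous (f i))
    (φ : X → ℝ) (hφ : Continuous φ) :
    (pressure f φ = ⨆ (α : Set (Set X)) (_ : IsOpenCover α),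
      Filter.limsup (fun n : ℕ => (↑(Real.log (qn f φ α n) / (n : ℝ)) : EReal)) atTop) ∧
    (∀ (Y : Type*) [MetricSpace Y] [CompactSpace Y] [Nonempty Y] (h : X ≃ₜ Y),
      pressure (fun i => (h : X → Y) ∘ f i ∘ (h.symm : Y → X)) (φ ∘ (h.symm : Y → X)) =
        pressure f φ) := by
  constructor
  · exact le_antisymm (pressure_le_cover_sup hf hφ)
      (iSup₂_le fun α hα => cover_limsup_le_pressure hf hφ hα)
  · intro Y _ _ _ h
    refine le_antisymm (pressure_conj_le f hf φ hφ h) ?_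
    have hg : ∀ i, Continuous ((h : X → Y) ∘ f i ∘ (h.symm : Y → X)) :=
      fun i => h.continuous.comp ((hf i).comp h.symm.continuous)
    have hψ : Continuous (φ ∘ (h.symm : Y → X)) := hφ.comp h.symm.continuous
    have hle := pressure_conj_le (fun i => (h : X → Y) ∘ f i ∘ (h.symm : Y → X)) hg
      (φ ∘ (h.symm : Y → X)) hψ h.symm
    have e1 : (fun i => (h.symm : Y → X) ∘ ((h : X → Y) ∘ f i ∘ (h.symm : Y → X)) ∘
        ((h.symm.symm : X ≃ₜ Y) : X → Y)) = f := by
      funext i x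
      simp
    have e2 : (φ ∘ (h.symm : Y → X)) ∘ ((h.symm.symm : X ≃ₜ Y) : X → Y) = φ := by
      funext x
      simp
    rw [e1, e2] at hle
    exact hle

end FSA
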